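/- For every d ≥ 1, the cones 𝔓_{2d} := ⋂_{n≥2d} P^S_{n,2d} and 𝔖_{2d} := ⋂_{n≥2d} Σ^S_{n,2d} are full-dimensional convex cones in ℝ^{π(2d)}; that is, each has nonempty interior in ℝ^{π(2d)}. -/

import Mathlib

open MvPolynomial

/-- The i-th normalized power sum `p_i^{(n)} = (1/n)(x_1^i + ⋯ + x_n^i)`. -/
noncomputable def psum (n i : ℕ) : MvPolynomial (Fin n) ℝ :=
  C ((n : ℝ)⁻¹) * ∑ j : Fin n, X j ^ i

/-- For a partition `λ` of `k`, `p_λ^{(n)} = p_{λ_1}^{(n)} ⋯ p_{λ_l}^{(n)}`. -/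
noncomputable def pPart (n : ℕ) {k : ℕ} (lam : Nat.Partition k) : MvPolynomial (Fin n) ℝ :=
  (lam.parts.map (psum n)).prod

/-- The symmetric form `f^{(n)} = Σ_{λ ⊢ k} c_λ p_λ^{(n)}` determined by the
coefficient vector `c`. -/
noncomputable def symForm (n : ℕ) {k : ℕ} (c : Nat.Partition k → ℝ) : MvPolynomial (Fin n) ℝ :=
  ∑ lam : Nat.Partition k, C (c lam) * pPart n lam

/-- `P^S_{n,2d}`: coefficient vectors whose associated symmetric form in `n`
variables is nonnegative on `ℝ^n`. -/
def PCone (n : ℕ) (k : ℕ) : Set (Nat.Partition k → ℝ) :=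
  {c | ∀ x : Fin n → ℝ, 0 ≤ eval x (symForm n c)}

/-- `Σ^S_{n,2d}`: coefficient vectors whose associated symmetric form in `n`
variables is a sum of squares of polynomials. -/
def SCone (n : ℕ) (k : ℕ) : Set (Nat.Partition k → ℝ) :=
  {c | IsSumSq (symForm n c)}

-- === basic SOS lemmas ===
lemma sos_mul {σ : Type*} {p q : MvPolynomial σ ℝ} (hp : IsSumSq p) (hq : IsSumSq q) :
    IsSumSq (p * q) := by
  induction hp with
  | zero => simpa using IsSumSq.zero
  | @sq_add a S pS ih =>
    have h : ∀ {t : MvPolynomial σ ℝ}, IsSumSq t → IsSumSq (a * a * t) := by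
      intro t ht
      induction ht with
      | zero => simpa using IsSumSq.zero
      | @sq_add b T pT ih2 =>
        have : a * a * (b * b + T) = (a*b) * (a*b) + a * a * T := by ring
        rw [this]; exact IsSumSq.sq_add _ ih2
    have : (a * a + S) * q = a * a * q + S * q := by ring
    rw [this]; exact (h hq).add ih

lemma sos_Cmul {σ : Type*} {a : ℝ} (ha : 0 ≤ a) {p : MvPolynomial σ ℝ} (hp : IsSumSq p) :
    IsSumSq (C a * p) := by
  induction hp with
  | zero => simpa using IsSumSq.zero
  | @sq_add b S pS ih =>
    have : C a * (b * b + S) = (C (Real.sqrt a) * b) * (C (Real.sqrt a) * b) + C a * S := by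
      rw [show (C (Real.sqrt a) * b) * (C (Real.sqrt a) * b)
          = C (Real.sqrt a * Real.sqrt a) * (b * b) by rw [map_mul]; ring,
        Real.mul_self_sqrt ha]
      ring
    rw [this]; exact IsSumSq.sq_add _ ih

lemma sos_sum {σ ι : Type*} (s : Finset ι) (f : ι → MvPolynomial σ ℝ)
    (h : ∀ i ∈ s, IsSumSq (f i)) : IsSumSq (∑ i ∈ s, f i) := by
  induction s using Finset.cons_induction with
  | empty => simpa using IsSumSq.zero
  | cons i s his ih =>
    rw [Finset.sum_cons]
    exact (h i (by simp)).add (ih fun j hj => h j (by simp [hj]))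

lemma sos_one {σ : Type*} : IsSumSq (1 : MvPolynomial σ ℝ) := by
  have : (1 : MvPolynomial σ ℝ) = 1 * 1 + 0 := by ring
  rw [this]; exact IsSumSq.sq_add _ IsSumSq.zero

lemma sos_psum_even (n k : ℕ) : IsSumSq (_root_.psum n (2 * k)) := by
  unfold _root_.psum
  have : ∑ j : Fin n, (X j : MvPolynomial (Fin n) ℝ) ^ (2 * k)
      = ∑ j : Fin n, (X j ^ k) * (X j ^ k) := by
    refine Finset.sum_congr rfl fun j _ => ?_
    rw [← pow_add, two_mul]
  rw [this]
  exact sos_Cmul (by positivity) (IsSumSq.sum_mul_self _ _)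

-- === SOS pairs ===
def SOSpair {σ : Type*} (P Q : MvPolynomial σ ℝ) : Prop :=
  IsSumSq (P - Q) ∧ IsSumSq (P + Q)

lemma SOSpair.self {σ : Type*} {P : MvPolynomial σ ℝ} (h : IsSumSq P) : SOSpair P P := by
  constructor
  · rw [sub_self]; exact IsSumSq.zero
  · exact h.add h

lemma SOSpair.congr {σ : Type*} {P Q P' Q' : MvPolynomial σ ℝ} (h : SOSpair P Q)
    (hP : P = P') (hQ : Q = Q') : SOSpair P' Q' := hP ▸ hQ ▸ h

lemma two_C_half {σ : Type*} : (2 : MvPolynomial σ ℝ) * C (2⁻¹ : ℝ) = 1 := by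
  rw [← map_ofNat (C : ℝ →+* MvPolynomial σ ℝ) 2, ← map_mul]
  norm_num

lemma SOSpair.mul {σ : Type*} {X Y Z W : MvPolynomial σ ℝ} (h1 : SOSpair X Y)
    (h2 : SOSpair Z W) : SOSpair (X * Z) (Y * W) := by
  have e1 : X * Z - Y * W = C (2⁻¹:ℝ) * ((X+Y)*(Z-W) + (X-Y)*(Z+W)) := by
    linear_combination (-(X * Z - Y * W)) * (two_C_half (σ := σ))
  have e2 : X * Z + Y * W = C (2⁻¹:ℝ) * ((X+Y)*(Z+W) + (X-Y)*(Z-W)) := by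
    linear_combination (-(X * Z + Y * W)) * (two_C_half (σ := σ))
  constructor
  · rw [e1]
    exact sos_Cmul (by norm_num) ((sos_mul h1.2 h2.1).add (sos_mul h1.1 h2.2))
  · rw [e2]
    exact sos_Cmul (by norm_num) ((sos_mul h1.2 h2.2).add (sos_mul h1.1 h2.1))

lemma SOSpair.mix {σ : Type*} {P Q : MvPolynomial σ ℝ} (h : SOSpair P Q) {e : ℝ}
    (he : |e| ≤ 1) : IsSumSq (P + C e * Q) := by
  obtain ⟨hl, hr⟩ := abs_le.mp he
  have h₁ : (C ((1-e)/2) : MvPolynomial σ ℝ) + C ((1+e)/2) = 1 := by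
    rw [← map_add, ← map_one (C : ℝ →+* MvPolynomial σ ℝ)]; ring_nf
  have h₂ : (C ((1+e)/2) : MvPolynomial σ ℝ) - C ((1-e)/2) = C e := by
    rw [← map_sub]; ring_nf
  have key : P + C e * Q = C ((1-e)/2) * (P - Q) + C ((1+e)/2) * (P + Q) := by
    linear_combination (-P) * h₁ + (-Q) * h₂
  rw [key]
  exact (sos_Cmul (by linarith) h.1).add (sos_Cmul (by linarith) h.2)

-- === pair key identity ===
lemma psum_mul (n a b : ℕ) : _root_.psum n a * _root_.psum n b
    = C ((n:ℝ)⁻¹ * (n:ℝ)⁻¹) * ∑ i : Fin n, ∑ j : Fin n, X i ^ a * X j ^ b := by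
  unfold _root_.psum
  rw [mul_mul_mul_comm, Finset.sum_mul_sum, map_mul]

lemma pair_key (n k m : ℕ) {s : ℝ} (hs : s * s = 1) :
    C (2⁻¹ : ℝ) * (_root_.psum n (2*k+2) * _root_.psum n (2*m)
        + _root_.psum n (2*k) * _root_.psum n (2*m+2))
      + C s * (_root_.psum n (2*k+1) * _root_.psum n (2*m+1))
    = C (2⁻¹ * ((n:ℝ)⁻¹ * (n:ℝ)⁻¹)) * ∑ i : Fin n, ∑ j : Fin n,
        (X i ^ (k+1) * X j ^ m + C s * (X i ^ k * X j ^ (m+1)))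
        * (X i ^ (k+1) * X j ^ m + C s * (X i ^ k * X j ^ (m+1))) := by
  simp only [psum_mul, Finset.mul_sum, ← Finset.sum_add_distrib]
  refine Finset.sum_congr rfl fun i _ => Finset.sum_congr rfl fun j _ => ?_
  have hC : (C s : MvPolynomial (Fin n) ℝ) * C s = 1 := by
    rw [← map_mul, hs, map_one]
  have h2 : (2 : MvPolynomial (Fin n) ℝ) * C (2⁻¹ : ℝ) = 1 := two_C_half
  simp only [map_mul]
  linear_combination (-(C (2⁻¹:ℝ) * C ((n:ℝ)⁻¹) * C ((n:ℝ)⁻¹) *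
      (X i ^ k * X j ^ (m+1)) * (X i ^ k * X j ^ (m+1)))) * hC
    + (-(C ((n:ℝ)⁻¹) * C ((n:ℝ)⁻¹) * C s * (X i ^ (k+1) * X j ^ m) *
      (X i ^ k * X j ^ (m+1)))) * h2

lemma pair_sos (n k m : ℕ) :
    SOSpair (C (2⁻¹ : ℝ) * (_root_.psum n (2*k+2) * _root_.psum n (2*m)
        + _root_.psum n (2*k) * _root_.psum n (2*m+2)))
      (_root_.psum n (2*k+1) * _root_.psum n (2*m+1)) := by
  constructor
  · have h := pair_key n k m (s := -1) (by norm_num)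
    rw [show (C (-1:ℝ) : MvPolynomial (Fin n) ℝ) = -1 by rw [map_neg, map_one]] at h
    rw [show ∀ P Q : MvPolynomial (Fin n) ℝ, P - Q = P + (-1) * Q by intros; ring]
    rw [h]
    refine sos_Cmul (by positivity) (sos_sum _ _ fun i _ => ?_)
    exact IsSumSq.sum_mul_self _ _
  · have h := pair_key n k m (s := 1) (by norm_num)
    rw [map_one, one_mul] at h
    rw [h]
    refine sos_Cmul (by positivity) (sos_sum _ _ fun i _ => ?_)
    exact IsSumSq.sum_mul_self _ _

-- === multiset products and finsupp representations ===
noncomputable def pMS (n : ℕ) (m : Multiset ℕ) : MvPolynomial (Fin n) ℝ :=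
  (m.map (_root_.psum n)).prod

noncomputable def pList (n : ℕ) (l : List ℕ) : MvPolynomial (Fin n) ℝ :=
  (l.map (_root_.psum n)).prod

lemma pMS_coe (n : ℕ) (l : List ℕ) : pMS n (↑l) = pList n l := by
  simp [pMS, pList]

lemma pMS_cons (n a : ℕ) (m : Multiset ℕ) : pMS n (a ::ₘ m) = _root_.psum n a * pMS n m := by
  simp [pMS]

noncomputable def rep (n : ℕ) (q : Multiset ℕ →₀ ℝ) : MvPolynomial (Fin n) ℝ :=
  q.sum fun m a => C a * pMS n m

lemma rep_single (n : ℕ) (m : Multiset ℕ) : rep n (Finsupp.single m 1) = pMS n m := by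
  rw [rep, Finsupp.sum_single_index] <;> simp

lemma rep_add (n : ℕ) (q q' : Multiset ℕ →₀ ℝ) : rep n (q + q') = rep n q + rep n q' := by
  unfold rep
  apply Finsupp.sum_add_index <;> intros <;> simp [map_add, add_mul]

lemma rep_smul (n : ℕ) (c : ℝ) (q : Multiset ℕ →₀ ℝ) : rep n (c • q) = C c * rep n q := by
  unfold rep
  rw [Finsupp.sum_smul_index (by intro m; simp), Finsupp.mul_sum]
  refine Finsupp.sum_congr fun m _ => ?_
  rw [map_mul]; ring

noncomputable def consF (a : ℕ) (q : Multiset ℕ →₀ ℝ) : Multiset ℕ →₀ ℝ :=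
  Finsupp.mapDomain (fun m => a ::ₘ m) q

lemma rep_consF (n a : ℕ) (q : Multiset ℕ →₀ ℝ) :
    rep n (consF a q) = _root_.psum n a * rep n q := by
  unfold rep consF
  rw [Finsupp.sum_mapDomain_index_inj (fun m m' => (Multiset.cons_inj_right a).mp),
    Finsupp.mul_sum]
  refine Finsupp.sum_congr fun m _ => ?_
  rw [pMS_cons]; ring

-- === the recursive certificate ===
noncomputable def Qc : List ℕ → List ℕ → (Multiset ℕ →₀ ℝ)
  | [], evens => Finsupp.single (↑evens) 1
  | [_], _ => 0
  | a :: b :: rest, evens =>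
      (2⁻¹ : ℝ) • (consF (a+1) (consF (b-1) (Qc rest evens))
        + consF (a-1) (consF (b+1) (Qc rest evens)))

lemma sos_pList_even (n : ℕ) : ∀ l : List ℕ, (∀ e ∈ l, Even e) → IsSumSq (pList n l)
  | [], _ => by simpa [pList] using sos_one
  | e :: l, h => by
    obtain ⟨r, hr⟩ := h e (by simp)
    have he : e = 2 * r := by omega
    rw [pList, List.map_cons, List.prod_cons, ← pList]
    exact sos_mul (he ▸ sos_psum_even n r)
      (sos_pList_even n l fun x hx => h x (by simp [hx]))

theorem mainSOS (n : ℕ) : ∀ (odds : List ℕ), (∀ a ∈ odds, Odd a) → Even odds.length →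
    ∀ (evens : List ℕ), (∀ e ∈ evens, Even e) →
    SOSpair (rep n (Qc odds evens)) (pList n (odds ++ evens))
  | [], _, _, evens, he => by
    rw [Qc, rep_single, pMS_coe, List.nil_append]
    exact SOSpair.self (sos_pList_even n evens he)
  | [a], _, hlen, _, _ => by simp at hlen
  | a :: b :: rest, ho, hlen, evens, he => by
    obtain ⟨k, hk⟩ := ho a (by simp)
    obtain ⟨m, hm⟩ := ho b (by simp)
    have IH := mainSOS n rest (fun x hx => ho x (by simp [hx]))
      (by obtain ⟨r, hr⟩ := hlen; exact ⟨r - 1, by simp at hr ⊢; omega⟩) evens he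
    have hpair := pair_sos n k m
    have hmul := hpair.mul IH
    refine hmul.congr ?_ ?_
    · rw [Qc, rep_smul, rep_add, rep_consF, rep_consF, rep_consF, rep_consF]
      rw [show a + 1 = 2*k+2 by omega, show a - 1 = 2*k by omega,
        show b - 1 = 2*m by omega, show b + 1 = 2*m+2 by omega]
      ring
    · rw [show a = 2*k+1 by omega, show b = 2*m+1 by omega]
      simp only [pList, List.cons_append, List.map_cons, List.prod_cons]
      ring

-- === support sum invariant ===
theorem Qc_sum : ∀ (odds : List ℕ), (∀ a ∈ odds, Odd a) → ∀ (evens : List ℕ),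
    ∀ m ∈ (Qc odds evens).support, m.sum = odds.sum + evens.sum
  | [], _, evens, m, hm => by
    rw [Qc] at hm
    have := Finsupp.support_single_subset hm
    simp only [Finset.mem_singleton] at this
    subst this
    simp
  | [a], _, evens, m, hm => by simp [Qc] at hm
  | a :: b :: rest, ho, evens, m, hm => by
    obtain ⟨k, hk⟩ := ho a (by simp)
    obtain ⟨l, hl⟩ := ho b (by simp)
    rw [Qc] at hm
    have h1 := Finsupp.support_smul hm
    have h2 := Finsupp.support_add h1
    rw [Finset.mem_union] at h2
    have IH := Qc_sum rest (fun x hx => ho x (by simp [hx])) evens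
    rcases h2 with h | h <;>
    · obtain ⟨m₁, hm₁, rfl⟩ := Finset.mem_image.mp (Finsupp.mapDomain_support h)
      obtain ⟨m₂, hm₂, rfl⟩ := Finset.mem_image.mp (Finsupp.mapDomain_support hm₁)
      have := IH m₂ hm₂
      simp only [Multiset.sum_cons, List.sum_cons, this]
      omega

-- === dropping zero parts / partitions ===
lemma psum_zero {n : ℕ} (hn : n ≠ 0) : _root_.psum n 0 = 1 := by
  unfold _root_.psum
  simp only [pow_zero, Finset.sum_const, Finset.card_univ, Fintype.card_fin, nsmul_eq_mul,
    mul_one]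
  rw [← map_natCast (C : ℝ →+* MvPolynomial (Fin n) ℝ) n, ← map_mul,
    inv_mul_cancel₀ (Nat.cast_ne_zero.mpr hn), map_one]

lemma filter_pos_sum (m : Multiset ℕ) : (m.filter (0 < ·)).sum = m.sum := by
  induction m using Multiset.induction with
  | empty => simp
  | cons a m ih =>
    by_cases ha : 0 < a
    · rw [Multiset.filter_cons_of_pos _ ha, Multiset.sum_cons, Multiset.sum_cons, ih]
    · rw [Multiset.filter_cons_of_neg _ ha, Multiset.sum_cons, ih]
      omega

lemma pMS_filter {n : ℕ} (hn : n ≠ 0) (m : Multiset ℕ) :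
    pMS n (m.filter (0 < ·)) = pMS n m := by
  induction m using Multiset.induction with
  | empty => simp
  | cons a m ih =>
    by_cases ha : 0 < a
    · rw [Multiset.filter_cons_of_pos _ ha, pMS_cons, pMS_cons, ih]
    · have h0 : a = 0 := by omega
      rw [Multiset.filter_cons_of_neg _ ha, pMS_cons, ih, h0, psum_zero hn, one_mul]

noncomputable def toPart (K : ℕ) (m : Multiset ℕ) : Nat.Partition K :=
  if h : (m.filter (0 < ·)).sum = K then
    ⟨m.filter (0 < ·), fun hi => (Multiset.mem_filter.mp hi).2, h⟩
  else Nat.Partition.indiscrete K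

lemma pPart_toPart {n K : ℕ} (hn : n ≠ 0) {m : Multiset ℕ} (hm : m.sum = K) :
    pPart n (toPart K m) = pMS n m := by
  have hf : (m.filter (0 < ·)).sum = K := by rw [filter_pos_sum, hm]
  rw [toPart, dif_pos hf]
  show pMS n (m.filter (0 < ·)) = pMS n m
  exact pMS_filter hn m

-- === per-partition lists ===
noncomputable def oddsL {K : ℕ} (lam : Nat.Partition K) : List ℕ :=
  lam.parts.toList.filter (fun a => decide (Odd a))

noncomputable def evensL {K : ℕ} (lam : Nat.Partition K) : List ℕ :=
  lam.parts.toList.filter (fun a => !decide (Odd a))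

lemma oddsL_odd {K : ℕ} (lam : Nat.Partition K) : ∀ a ∈ oddsL lam, Odd a := by
  intro a ha
  simp only [oddsL, List.mem_filter, decide_eq_true_eq] at ha
  exact ha.2

lemma evensL_even {K : ℕ} (lam : Nat.Partition K) : ∀ e ∈ evensL lam, Even e := by
  intro e he
  simp only [evensL, List.mem_filter, Bool.not_eq_true', decide_eq_false_iff_not] at he
  exact Nat.not_odd_iff_even.mp he.2

lemma oddsL_append_perm {K : ℕ} (lam : Nat.Partition K) :
    (oddsL lam ++ evensL lam).Perm lam.parts.toList :=
  List.filter_append_perm _ _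

lemma even_filter_odd : ∀ l : List ℕ,
    (Even l.sum ↔ Even (l.filter (fun a => decide (Odd a))).length)
  | [] => by simp
  | a :: l => by
    rcases Nat.even_or_odd a with ha | ha
    · have hna : ¬ Odd a := by simpa [Nat.not_odd_iff_even] using ha
      simp only [List.sum_cons, List.filter_cons, hna, decide_eq_true_eq, if_false]
      rw [Nat.even_add, ← even_filter_odd l]
      simp [ha]
    · simp only [List.sum_cons, List.filter_cons, ha, decide_eq_true_eq, if_true,
        List.length_cons]
      rw [Nat.even_add, Nat.even_add_one, ← even_filter_odd l]
      simp [Nat.not_even_iff_odd.mpr ha]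

lemma oddsL_even_length {K : ℕ} (hK : Even K) (lam : Nat.Partition K) :
    Even (oddsL lam).length := by
  have hsum : lam.parts.toList.sum = K := by rw [Multiset.sum_toList, lam.parts_sum]
  exact (even_filter_odd _).mp (by rw [hsum]; exact hK)

lemma pList_toList {n K : ℕ} (lam : Nat.Partition K) :
    pList n lam.parts.toList = pPart n lam := by
  show pList n lam.parts.toList = pMS n lam.parts
  rw [← Multiset.coe_toList lam.parts, pMS_coe, Multiset.coe_toList]

lemma pList_oddsL_evensL {n K : ℕ} (lam : Nat.Partition K) :
    pList n (oddsL lam ++ evensL lam) = pPart n lam := by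
  rw [← pList_toList]
  unfold pList
  exact ((oddsL_append_perm lam).map (psum n)).prod_eq

lemma oddsL_evensL_sum {K : ℕ} (lam : Nat.Partition K) :
    (oddsL lam).sum + (evensL lam).sum = K := by
  rw [← List.sum_append, (oddsL_append_perm lam).sum_eq, Multiset.sum_toList, lam.parts_sum]

-- === the center certificate ===
noncomputable def qvecF (K : ℕ) (lam : Nat.Partition K) : Nat.Partition K →₀ ℝ :=
  Finsupp.mapDomain (toPart K) (Qc (oddsL lam) (evensL lam))

noncomputable def center (K : ℕ) : Nat.Partition K → ℝ := fun mu => ∑ lam, qvecF K lam mu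

lemma symForm_finsupp (n K : ℕ) (F : Nat.Partition K →₀ ℝ) :
    symForm n ⇑F = F.sum fun mu a => C a * pPart n mu := by
  rw [symForm, Finsupp.sum]
  exact (Finset.sum_subset (Finset.subset_univ _) (fun mu _ hmu => by
    rw [Finsupp.notMem_support_iff.mp hmu, map_zero, zero_mul])).symm

lemma symForm_qvecF {n K : ℕ} (hn : n ≠ 0) (lam : Nat.Partition K) :
    symForm n ⇑(qvecF K lam) = rep n (Qc (oddsL lam) (evensL lam)) := by
  rw [qvecF, symForm_finsupp,
    Finsupp.sum_mapDomain_index (by intro b; rw [map_zero, zero_mul])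
      (by intro b m₁ m₂; rw [map_add, add_mul]), rep, Finsupp.sum, Finsupp.sum]
  refine Finset.sum_congr rfl fun m hm => ?_
  rw [pPart_toPart hn (by
    rw [Qc_sum (oddsL lam) (oddsL_odd lam) (evensL lam) m hm, oddsL_evensL_sum])]

lemma sospair_rep_pPart {n K : ℕ} (hK : Even K) (lam : Nat.Partition K) :
    SOSpair (rep n (Qc (oddsL lam) (evensL lam))) (pPart n lam) :=
  (mainSOS n (oddsL lam) (oddsL_odd lam) (oddsL_even_length hK lam) (evensL lam)
    (evensL_even lam)).congr rfl (pList_oddsL_evensL lam)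

lemma center_sos {K n : ℕ} (hn : n ≠ 0) (hK : Even K) (c : Nat.Partition K → ℝ)
    (hc : ∀ lam, |c lam - center K lam| ≤ 1) : IsSumSq (symForm n c) := by
  have hsplit : symForm n c = ∑ lam : Nat.Partition K,
      (rep n (Qc (oddsL lam) (evensL lam)) + C (c lam - center K lam) * pPart n lam) := by
    have step1 : symForm n c = ∑ lam : Nat.Partition K,
        (C (center K lam) * pPart n lam + C (c lam - center K lam) * pPart n lam) := by
      rw [symForm]
      refine Finset.sum_congr rfl fun lam _ => ?_
      rw [← add_mul, ← map_add]
      congr 2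
      ring
    have step2 : (∑ lam : Nat.Partition K, (C (center K lam) : MvPolynomial (Fin n) ℝ)
        * pPart n lam) = ∑ lam : Nat.Partition K, rep n (Qc (oddsL lam) (evensL lam)) := by
      calc ∑ lam : Nat.Partition K, (C (center K lam) : MvPolynomial (Fin n) ℝ) * pPart n lam
          = ∑ lam : Nat.Partition K, ∑ lam' : Nat.Partition K,
              C (qvecF K lam' lam) * pPart n lam :=
            Finset.sum_congr rfl fun lam _ => by
              rw [show center K lam = ∑ lam' : Nat.Partition K, qvecF K lam' lam from rfl,
                map_sum, Finset.sum_mul]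
        _ = ∑ lam' : Nat.Partition K, ∑ lam : Nat.Partition K,
              C (qvecF K lam' lam) * pPart n lam := Finset.sum_comm
        _ = ∑ lam' : Nat.Partition K, rep n (Qc (oddsL lam') (evensL lam')) :=
            Finset.sum_congr rfl fun lam' _ => symForm_qvecF hn lam'
    rw [step1, Finset.sum_add_distrib, step2, ← Finset.sum_add_distrib]
  rw [hsplit]
  exact sos_sum _ _ fun lam _ => (sospair_rep_pPart hK lam).mix (hc lam)

lemma sos_eval {σ : Type*} {p : MvPolynomial σ ℝ} (hp : IsSumSq p) (x : σ → ℝ) :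
    0 ≤ eval x p := by
  induction hp with
  | zero => rw [map_zero]
  | @sq_add a S pS ih =>
    rw [map_add, map_mul]
    exact add_nonneg (mul_self_nonneg _) ih

/-- The cones `𝔓_{2d} = ⋂_{n≥2d} P^S_{n,2d}` and `𝔖_{2d} = ⋂_{n≥2d} Σ^S_{n,2d}`
are full-dimensional in `ℝ^{π(2d)}`, i.e. have nonempty interior. -/
theorem fullDim_limit_cones (d : ℕ) (hd : 1 ≤ d) :
    (interior (⋂ n ∈ {n : ℕ | 2 * d ≤ n}, PCone n (2 * d))).Nonempty ∧
    (interior (⋂ n ∈ {n : ℕ | 2 * d ≤ n}, SCone n (2 * d))).Nonempty := by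
  set K := 2 * d with hKdef
  have hK : Even K := ⟨d, by omega⟩
  have hball : ∀ c ∈ Metric.ball (center K) 1, c ∈ ⋂ n ∈ {n : ℕ | K ≤ n}, SCone n K := by
    intro c hc
    rw [Set.mem_iInter₂]
    intro n hn
    have hn0 : n ≠ 0 := by
      simp only [Set.mem_setOf_eq] at hn
      omega
    refine center_sos hn0 hK c fun lam => ?_
    have h1 : dist (c lam) (center K lam) ≤ dist c (center K) := dist_le_pi_dist c (center K) lam
    have h2 : dist c (center K) < 1 := Metric.mem_ball.mp hc
    rw [Real.dist_eq] at h1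
    linarith
  have hSP : (⋂ n ∈ {n : ℕ | K ≤ n}, SCone n K) ⊆ ⋂ n ∈ {n : ℕ | K ≤ n}, PCone n K := by
    intro c hc
    rw [Set.mem_iInter₂] at hc ⊢
    intro n hn x
    exact sos_eval (hc n hn) x
  have hmem : ∀ (S : Set (Nat.Partition K → ℝ)), Metric.ball (center K) 1 ⊆ S →
      (interior S).Nonempty := by
    intro S hS
    exact ⟨center K, Set.mem_of_mem_of_subset
      (Metric.mem_ball_self one_pos)
      (interior_maximal hS Metric.isOpen_ball)⟩
  exact ⟨hmem _ (fun c hc => hSP (hball c hc)), hmem _ hball⟩
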